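/- Let G be a finite abelian group of order n with Davenport constant D, and put m = n + D - 1. Every sequence x = (x_1, ..., x_m) of elements of G has a zero-sum subsequence of length exactly n. -/

import Mathlib

open Finset
open scoped Pointwise

namespace GaoProof

variable {G : Type*} [AddCommGroup G] [DecidableEq G]

/-- Kemperman–Scherk: if `0` has only the trivial representation as `a + b`
with `a ∈ A`, `b ∈ B`, then `|A + B| ≥ |A| + |B| - 1`. -/
theorem scherk_aux [Fintype G] :
    ∀ (N : ℕ) (B A : Finset G), B.card ≤ N → (0:G) ∈ A → (0:G) ∈ B →
    (∀ a ∈ A, ∀ b ∈ B, a + b = 0 → a = 0 ∧ b = 0) →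
    A.card + B.card ≤ (A + B).card + 1 := by
  intro N
  induction N with
  | zero =>
    intro B A hB h0A h0B _
    have : B = ∅ := card_eq_zero.mp (Nat.le_zero.mp hB)
    simp [this] at h0B
  | succ N IH =>
    intro B A hB h0A h0B hUR
    by_cases hcase : ∃ a ∈ A, a ≠ 0 ∧ ∃ b ∈ B, b + a ∉ A
    · obtain ⟨a, haA, ha0, b₁, hb₁B, hb₁⟩ := hcase
      set X : Finset G := B.image (· + a) with hX
      set Y : Finset G := A.image (· - a) with hY
      -- the two "intersection" sets have the same size
      have himg : (A ∩ X).image (· - a) = B ∩ Y := by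
        ext v
        constructor
        · intro hv
          obtain ⟨u, hu, rfl⟩ := mem_image.mp hv
          obtain ⟨huA, huX⟩ := mem_inter.mp hu
          obtain ⟨w, hwB, rfl⟩ := mem_image.mp huX
          refine mem_inter.mpr ⟨by simpa using hwB, mem_image.mpr ⟨w + a, huA, rfl⟩⟩
        · intro hv
          obtain ⟨hvB, hvY⟩ := mem_inter.mp hv
          obtain ⟨z, hzA, rfl⟩ := mem_image.mp hvY
          refine mem_image.mpr ⟨z, mem_inter.mpr ⟨hzA, mem_image.mpr ⟨z - a, hvB, by abel⟩⟩, rfl⟩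
      have hinter : (A ∩ X).card = (B ∩ Y).card := by
        rw [← himg, Finset.card_image_of_injective _ (sub_left_injective)]
      have hXcard : X.card = B.card := Finset.card_image_of_injective _ (add_left_injective a)
      -- the transformed pair
      have hB'ss : B ∩ Y ⊂ B := by
        refine (ssubset_iff_of_subset inter_subset_left).mpr ⟨b₁, hb₁B, ?_⟩
        intro hb₁'
        obtain ⟨z, hzA, hz⟩ := mem_image.mp (mem_inter.mp hb₁').2
        exact hb₁ (by rw [show b₁ + a = z by rw [← hz]; abel]; exact hzA)
      have hB'card : (B ∩ Y).card < B.card := card_lt_card hB'ss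
      have h0A' : (0:G) ∈ A ∪ X := mem_union_left _ h0A
      have h0B' : (0:G) ∈ B ∩ Y :=
        mem_inter.mpr ⟨h0B, mem_image.mpr ⟨a, haA, by abel⟩⟩
      have hsub : (A ∪ X) + (B ∩ Y) ⊆ A + B := by
        intro t ht
        obtain ⟨u, hu, v, hv, rfl⟩ := Finset.mem_add.mp ht
        obtain ⟨hvB, hvY⟩ := mem_inter.mp hv
        rcases mem_union.mp hu with huA | huX
        · exact Finset.mem_add.mpr ⟨u, huA, v, hvB, rfl⟩
        · obtain ⟨w, hwB, rfl⟩ := mem_image.mp huX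
          obtain ⟨z, hzA, rfl⟩ := mem_image.mp hvY
          exact Finset.mem_add.mpr ⟨z, hzA, w, hwB, by abel⟩
      have hUR' : ∀ u ∈ A ∪ X, ∀ v ∈ B ∩ Y, u + v = 0 → u = 0 ∧ v = 0 := by
        intro u hu v hv huv
        obtain ⟨hvB, hvY⟩ := mem_inter.mp hv
        rcases mem_union.mp hu with huA | huX
        · exact hUR u huA v hvB huv
        · exfalso
          obtain ⟨w, hwB, rfl⟩ := mem_image.mp huX
          obtain ⟨z, hzA, rfl⟩ := mem_image.mp hvY
          have hzw : z + w = 0 := by rw [← huv]; abel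
          obtain ⟨hz0, hw0⟩ := hUR z hzA w hwB hzw
          subst hz0; subst hw0
          have hvB' : -a ∈ B := by simpa using hvB
          have := hUR a haA (-a) hvB' (by abel)
          exact ha0 this.1
      have hIH := IH (B ∩ Y) (A ∪ X) (by omega) h0A' h0B' hUR'
      have hcards : (A ∪ X).card + (A ∩ X).card = A.card + X.card :=
        card_union_add_card_inter A X
      have hmono : ((A ∪ X) + (B ∩ Y)).card ≤ (A + B).card := card_le_card hsub
      omega
    · -- no transform possible: closure argument
      push_neg at hcase
      -- hcase : ∀ a ∈ A, a ≠ 0 → ∀ b ∈ B, b + a ∈ A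
      set M := AddSubmonoid.closure (B : Set G) with hM
      have claim1 : ∀ g ∈ M, ∀ a ∈ A, a ≠ 0 → (a + g ∈ A ∧ a + g ≠ 0) := by
        intro g hg
        induction hg using AddSubmonoid.closure_induction with
        | mem b hb =>
          intro a haA ha0
          have hbB : b ∈ B := hb
          refine ⟨by rw [add_comm]; exact hcase a haA ha0 b hbB, ?_⟩
          intro hab
          exact ha0 (hUR a haA b hbB hab).1
        | zero =>
          intro a haA ha0
          simpa using ⟨haA, ha0⟩
        | add g₁ g₂ hg₁ hg₂ ih₁ ih₂ =>
          intro a haA ha0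
          have h1 := ih₁ a haA ha0
          have h2 := ih₂ (a + g₁) h1.1 h1.2
          constructor
          · rw [← add_assoc]; exact h2.1
          · rw [← add_assoc]; exact h2.2
      have claim2 : ∀ v ∈ M, v ∈ A → v = 0 := by
        intro v hvM hvA
        by_contra hv0
        -- -v ∈ M
        have hk : 0 < addOrderOf v := addOrderOf_pos v
        have hkv : addOrderOf v • v = 0 := addOrderOf_nsmul_eq_zero v
        have hneg : (addOrderOf v - 1) • v = -v := by
          have h1 : (addOrderOf v - 1) • v + v = 0 := by
            rw [← succ_nsmul, Nat.sub_add_cancel hk]; exact hkv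
          exact eq_neg_of_add_eq_zero_left h1
        have hnegM : -v ∈ M := hneg ▸ nsmul_mem hvM _
        have := (claim1 (-v) hnegM v hvA hv0).2
        simp at this
      have hBM : ∀ b ∈ B, b ∈ M := fun b hb => AddSubmonoid.subset_closure hb
      have hkey : A + B = B ∪ A.erase 0 := by
        ext t
        constructor
        · intro ht
          obtain ⟨u, hu, v, hv, rfl⟩ := Finset.mem_add.mp ht
          by_cases hu0 : u = 0
          · subst hu0; simpa using Or.inl hv
          · have := claim1 v (hBM v hv) u hu hu0
            exact mem_union_right _ (mem_erase.mpr ⟨this.2, this.1⟩)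
        · intro ht
          rcases mem_union.mp ht with htB | htA
          · exact Finset.mem_add.mpr ⟨0, h0A, t, htB, by abel⟩
          · exact Finset.mem_add.mpr ⟨t, (mem_erase.mp htA).2, 0, h0B, by abel⟩
      have hdisj : Disjoint B (A.erase 0) := by
        rw [Finset.disjoint_left]
        intro b hbB hbA
        obtain ⟨hb0, hbA'⟩ := mem_erase.mp hbA
        exact hb0 (claim2 b (hBM b hbB) hbA')
      have hA1 : 1 ≤ A.card := card_pos.mpr ⟨0, h0A⟩
      rw [hkey, card_union_of_disjoint hdisj, card_erase_of_mem h0A]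
      omega

theorem scherk [Fintype G] (A B : Finset G) (h0A : (0:G) ∈ A) (h0B : (0:G) ∈ B)
    (hUR : ∀ a ∈ A, ∀ b ∈ B, a + b = 0 → a = 0 ∧ b = 0) :
    A.card + B.card ≤ (A + B).card + 1 :=
  scherk_aux B.card B A le_rfl h0A h0B hUR


/-- Membership in an indexed pointwise sum of finsets. -/
theorem mem_finsetSum {ι : Type*} [DecidableEq ι] (s : Finset ι) (Bf : ι → Finset G) (t : G) :
    t ∈ ∑ i ∈ s, Bf i ↔ ∃ g : ι → G, (∀ i ∈ s, g i ∈ Bf i) ∧ ∑ i ∈ s, g i = t := by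
  induction s using Finset.cons_induction generalizing t with
  | empty =>
    simp only [Finset.sum_empty, Finset.mem_zero]
    constructor
    · rintro rfl; exact ⟨fun _ => 0, by simp, by simp⟩
    · rintro ⟨g, -, rfl⟩; rfl
  | cons i s hi IH =>
    rw [Finset.sum_cons, Finset.mem_add]
    constructor
    · rintro ⟨u, hu, v, hv, rfl⟩
      obtain ⟨g, hg, rfl⟩ := (IH v).mp hv
      refine ⟨Function.update g i u, ?_, ?_⟩
      · intro j hj
        rcases Finset.mem_cons.mp hj with rfl | hjs
        · simpa using hu
        · have hji : j ≠ i := by rintro rfl; exact hi hjs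
          rw [Function.update_of_ne hji]
          exact hg j hjs
      · rw [Finset.sum_cons, Function.update_self]
        congr 1
        apply Finset.sum_congr rfl
        intro j hj
        have hji : j ≠ i := by rintro rfl; exact hi hj
        rw [Function.update_of_ne hji]
    · rintro ⟨g, hg, rfl⟩
      rw [Finset.sum_cons]
      exact ⟨g i, hg i (mem_cons_self i s), ∑ j ∈ s, g j,
        (IH _).mpr ⟨g, fun j hj => hg j (Finset.mem_cons.mpr (Or.inr hj)), rfl⟩, rfl⟩

/-- The selection theorem: finsets `A i ⊆ G \ {0}` with total size at least `|G|`
admit a nonempty zero-sum selection. -/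
theorem astar [Fintype G] {ι : Type*} [DecidableEq ι] (s : Finset ι) (A : ι → Finset G)
    (h0 : ∀ i ∈ s, (0:G) ∉ A i) (hsum : Fintype.card G ≤ ∑ i ∈ s, (A i).card) :
    ∃ g : ι → G, (∀ i ∈ s, g i ∈ insert (0:G) (A i)) ∧ (∃ i ∈ s, g i ≠ 0) ∧
      ∑ i ∈ s, g i = 0 := by
  by_contra hcon
  push_neg at hcon
  have key : ∀ t : Finset ι, t ⊆ s →
      1 + ∑ i ∈ t, (A i).card ≤ (∑ i ∈ t, insert (0:G) (A i)).card := by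
    intro t
    induction t using Finset.cons_induction with
    | empty =>
      intro _
      simp only [Finset.sum_empty]
      have : ((0 : Finset G)).card = 1 := rfl
      omega
    | cons i t hi IHt =>
      intro hsub
      have hts : t ⊆ s := fun j hj => hsub (Finset.mem_cons.mpr (Or.inr hj))
      have his : i ∈ s := hsub (mem_cons_self i t)
      rw [Finset.sum_cons, Finset.sum_cons]
      have h0T : (0:G) ∈ ∑ j ∈ t, insert (0:G) (A j) :=
        (mem_finsetSum t _ 0).mpr ⟨fun _ => 0, fun j _ => mem_insert_self 0 _, by simp⟩
      have hUR : ∀ u ∈ insert (0:G) (A i), ∀ v ∈ ∑ j ∈ t, insert (0:G) (A j),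
          u + v = 0 → u = 0 ∧ v = 0 := by
        intro u hu v hv huv
        by_contra hne
        obtain ⟨g, hg, hgsum⟩ := (mem_finsetSum t _ v).mp hv
        set gg : ι → G := fun j => if j ∈ Finset.cons i t hi then Function.update g i u j else 0
          with hgg
        have hmem : ∀ j ∈ s, gg j ∈ insert (0:G) (A j) := by
          intro j hjs
          by_cases hj : j ∈ Finset.cons i t hi
          · rw [hgg]; simp only [if_pos hj]
            rcases Finset.mem_cons.mp hj with rfl | hjt
            · rw [Function.update_self]; exact hu
            · rw [Function.update_of_ne (by rintro rfl; exact hi hjt)]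
              exact hg j hjt
          · rw [hgg]; simp only [if_neg hj]; exact mem_insert_self 0 _
        have hconssum : ∑ j ∈ Finset.cons i t hi, gg j = 0 := by
          have : ∀ j ∈ Finset.cons i t hi, gg j = Function.update g i u j := by
            intro j hj; rw [hgg]; simp only [if_pos hj]
          rw [Finset.sum_congr rfl this, Finset.sum_cons, Function.update_self]
          have : ∑ j ∈ t, Function.update g i u j = ∑ j ∈ t, g j := by
            apply Finset.sum_congr rfl
            intro j hj
            rw [Function.update_of_ne (by rintro rfl; exact hi hj)]
          rw [this, hgsum, huv]
        have hsum0 : ∑ j ∈ s, gg j = 0 := by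
          rw [← Finset.sum_subset hsub (fun j _ hjn => by rw [hgg]; simp only [if_neg hjn])]
          exact hconssum
        have hex : ∃ j ∈ s, gg j ≠ 0 := by
          by_cases hu0 : u = 0
          · have hv0 : v ≠ 0 := fun hv0 => hne ⟨hu0, hv0⟩
            have : ∃ j ∈ t, g j ≠ 0 := by
              by_contra hall
              push_neg at hall
              exact hv0 (hgsum ▸ Finset.sum_eq_zero hall)
            obtain ⟨j, hjt, hj0⟩ := this
            refine ⟨j, hts hjt, ?_⟩
            rw [hgg]
            simp only [if_pos (Finset.mem_cons.mpr (Or.inr hjt))]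
            rw [Function.update_of_ne (by rintro rfl; exact hi hjt)]
            exact hj0
          · refine ⟨i, his, ?_⟩
            rw [hgg]
            simp only [if_pos (mem_cons_self i t)]
            rw [Function.update_self]
            exact hu0
        exact hcon gg hmem hex hsum0
      have hSch := scherk (insert (0:G) (A i)) (∑ j ∈ t, insert (0:G) (A j))
        (mem_insert_self 0 _) h0T hUR
      have hins : (insert (0:G) (A i)).card = (A i).card + 1 :=
        card_insert_of_notMem (h0 i his)
      have hIHt := IHt hts
      omega
  have h1 := key s (subset_refl s)
  have h2 : (∑ i ∈ s, insert (0:G) (A i)).card ≤ Fintype.card G := card_le_univ _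
  omega


/-- Every family of at least `|G|` nonzero elements, each value appearing at most `h`
times, has a nonempty zero-sum subfamily of size at most `h`. -/
theorem exists_small_piece [Fintype G] {ι : Type*} [LinearOrder ι]
    (y : ι → G) (U : Finset ι) (h : ℕ)
    (hcard : Fintype.card G ≤ U.card)
    (h0 : ∀ i ∈ U, y i ≠ 0)
    (hmult : ∀ g : G, (U.filter (fun i => y i = g)).card ≤ h) :
    ∃ P ⊆ U, P.Nonempty ∧ P.card ≤ h ∧ ∑ i ∈ P, y i = 0 := by
  classical
  have hUne : U.Nonempty := by
    rw [← card_pos]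
    have := Fintype.card_pos (α := G)
    omega
  obtain ⟨i₀, hi₀⟩ := hUne
  set rk : ι → ℕ := fun i => (U.filter (fun i' => y i' = y i ∧ i' < i)).card with hrk
  -- each rank is < h
  have r1 : ∀ i ∈ U, rk i < h := by
    intro i hiU
    have hss : U.filter (fun i' => y i' = y i ∧ i' < i) ⊂ U.filter (fun i' => y i' = y i) := by
      constructor
      · intro j hj
        have := mem_filter.mp hj
        exact mem_filter.mpr ⟨this.1, this.2.1⟩
      · intro hsub
        have : i ∈ U.filter (fun i' => y i' = y i ∧ i' < i) :=
          hsub (mem_filter.mpr ⟨hiU, rfl⟩)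
        exact absurd (mem_filter.mp this).2.2 (lt_irrefl i)
    exact lt_of_lt_of_le (card_lt_card hss) (hmult (y i))
  -- counting
  have r2 : U.card = ∑ j ∈ Finset.range h, (U.filter (fun i => rk i = j)).card :=
    card_eq_sum_card_fiberwise (fun i hi => Finset.mem_range.mpr (r1 i hi))
  -- y is injective on each rank class
  have r3 : ∀ j : ℕ, ∀ a ∈ U.filter (fun i => rk i = j), ∀ b ∈ U.filter (fun i => rk i = j),
      y a = y b → a = b := by
    have main : ∀ a b : ι, a ∈ U → b ∈ U → a < b → y a = y b → rk a < rk b := by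
      intro a b haU hbU hab hy
      have hsub : insert a (U.filter (fun i' => y i' = y a ∧ i' < a)) ⊆
          U.filter (fun i' => y i' = y b ∧ i' < b) := by
        intro j hj
        rcases Finset.mem_insert.mp hj with rfl | hj'
        · exact mem_filter.mpr ⟨haU, hy, hab⟩
        · obtain ⟨hjU, hjy, hja⟩ := mem_filter.mp hj'
          exact mem_filter.mpr ⟨hjU, hjy.trans hy, hja.trans hab⟩
      have hnotmem : a ∉ U.filter (fun i' => y i' = y a ∧ i' < a) := by
        intro hmem
        exact absurd (mem_filter.mp hmem).2.2 (lt_irrefl a)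
      have hle := card_le_card hsub
      rw [card_insert_of_notMem hnotmem] at hle
      have e1 : rk a = (U.filter (fun i' => y i' = y a ∧ i' < a)).card := rfl
      have e2 : rk b = (U.filter (fun i' => y i' = y b ∧ i' < b)).card := rfl
      omega
    intro j a ha b hb hy
    obtain ⟨haU, hra⟩ := mem_filter.mp ha
    obtain ⟨hbU, hrb⟩ := mem_filter.mp hb
    rcases lt_trichotomy a b with hab | hab | hab
    · have := main a b haU hbU hab hy; omega
    · exact hab
    · have := main b a hbU haU hab hy.symm; omega
  -- apply the selection theorem to the rank classes
  set A : ℕ → Finset G := fun j => (U.filter (fun i => rk i = j)).image y with hA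
  have hAcard : ∀ j, (A j).card = (U.filter (fun i => rk i = j)).card := by
    intro j
    exact Finset.card_image_of_injOn (fun a ha b hb => r3 j a ha b hb)
  have h0A : ∀ j ∈ Finset.range h, (0:G) ∉ A j := by
    intro j _ hmem
    obtain ⟨i, hi, hyi⟩ := mem_image.mp hmem
    exact h0 i (mem_filter.mp hi).1 hyi
  have hsumA : Fintype.card G ≤ ∑ j ∈ Finset.range h, (A j).card := by
    calc Fintype.card G ≤ U.card := hcard
    _ = _ := by rw [r2]; exact (Finset.sum_congr rfl (fun j _ => (hAcard j).symm))
  obtain ⟨g, hgmem, hgex, hgsum⟩ := astar (Finset.range h) A h0A hsumA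
  set J : Finset ℕ := (Finset.range h).filter (fun j => g j ≠ 0) with hJ
  have hJne : J.Nonempty := by
    obtain ⟨j, hjr, hj0⟩ := hgex
    exact ⟨j, mem_filter.mpr ⟨hjr, hj0⟩⟩
  have hJsum : ∑ j ∈ J, g j = 0 := by
    rw [← hgsum]
    apply Finset.sum_subset (filter_subset _ _)
    intro j hjr hjn
    by_contra hj0
    exact hjn (mem_filter.mpr ⟨hjr, hj0⟩)
  have hch : ∀ j : ℕ, ∃ i : ι, j ∈ J → (i ∈ U.filter (fun i' => rk i' = j) ∧ y i = g j) := by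
    intro j
    by_cases hj : j ∈ J
    · obtain ⟨hjr, hj0⟩ := mem_filter.mp hj
      have := hgmem j hjr
      rcases Finset.mem_insert.mp this with h' | h'
      · exact absurd h' hj0
      · obtain ⟨i, hi, hyi⟩ := mem_image.mp h'
        exact ⟨i, fun _ => ⟨hi, hyi⟩⟩
    · exact ⟨i₀, fun h' => absurd h' hj⟩
  choose f hf using hch
  have hfinj : ∀ a ∈ J, ∀ b ∈ J, f a = f b → a = b := by
    intro a ha b hb hab
    have h1 := (mem_filter.mp ((hf a ha).1)).2
    have h2 := (mem_filter.mp ((hf b hb).1)).2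
    rw [← h1, ← h2, hab]
  refine ⟨J.image f, ?_, hJne.image f, ?_, ?_⟩
  · intro i hi
    obtain ⟨j, hj, rfl⟩ := mem_image.mp hi
    exact (mem_filter.mp (hf j hj).1).1
  · rw [Finset.card_image_of_injOn (fun a ha b hb => hfinj a ha b hb)]
    calc J.card ≤ (Finset.range h).card := card_le_card (filter_subset _ _)
    _ = h := Finset.card_range h
  · rw [Finset.sum_image hfinj]
    rw [← hJsum]
    exact Finset.sum_congr rfl (fun j hj => (hf j hj).2)


/-- Greedy extraction of a large zero-sum subfamily using the Davenport property. -/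
theorem extract {ι : Type*} [DecidableEq ι] (y : ι → G) (D : ℕ)
    (hdav : ∀ s : Finset ι, D ≤ s.card → ∃ P ⊆ s, P.Nonempty ∧ ∑ i ∈ P, y i = 0)
    (R : Finset ι) : ∃ U ⊆ R, ∑ i ∈ U, y i = 0 ∧ R.card ≤ U.card + (D - 1) := by
  induction R using Finset.strongInduction with
  | _ R IH =>
    by_cases hR : R.card < D
    · exact ⟨∅, empty_subset R, by simp, by omega⟩
    · push_neg at hR
      obtain ⟨P, hPR, hPne, hPsum⟩ := hdav R hR
      obtain ⟨U', hU'sub, hU'sum, hU'card⟩ := IH (R \ P) (sdiff_ssubset hPR hPne)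
      have hdisj : Disjoint U' P :=
        Finset.disjoint_of_subset_left hU'sub sdiff_disjoint
      refine ⟨U' ∪ P, union_subset (hU'sub.trans (sdiff_subset)) hPR, ?_, ?_⟩
      · rw [Finset.sum_union hdisj, hU'sum, hPsum, add_zero]
      · have h1 : (R \ P).card = R.card - P.card := card_sdiff_of_subset hPR
        have h2 : (U' ∪ P).card = U'.card + P.card := card_union_of_disjoint hdisj
        have h3 : P.card ≤ R.card := card_le_card hPR
        have h4 : 1 ≤ P.card := card_pos.mpr hPne
        omega

/-- Shrinking a zero-sum subfamily down to size at most `|G|` while keeping it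
within `h` of `|G|`. -/
theorem shrink [Fintype G] {ι : Type*} [LinearOrder ι]
    (y : ι → G) (T : Finset ι) (h : ℕ)
    (h0 : ∀ i ∈ T, y i ≠ 0)
    (hmult : ∀ g : G, (T.filter (fun i => y i = g)).card ≤ h) :
    ∀ U, U ⊆ T → ∑ i ∈ U, y i = 0 → Fintype.card G ≤ U.card + h →
    ∃ U' ⊆ T, ∑ i ∈ U', y i = 0 ∧ Fintype.card G ≤ U'.card + h ∧
      U'.card ≤ Fintype.card G := by
  intro U
  induction U using Finset.strongInduction with
  | _ U IH =>
    intro hUT hUsum hUinv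
    by_cases hUle : U.card ≤ Fintype.card G
    · exact ⟨U, hUT, hUsum, hUinv, hUle⟩
    · push_neg at hUle
      have hUcard : Fintype.card G ≤ U.card := le_of_lt hUle
      have hU0 : ∀ i ∈ U, y i ≠ 0 := fun i hi => h0 i (hUT hi)
      have hUmult : ∀ g : G, (U.filter (fun i => y i = g)).card ≤ h := by
        intro g
        exact le_trans (card_le_card (filter_subset_filter _ hUT)) (hmult g)
      obtain ⟨P, hPU, hPne, hPcard, hPsum⟩ :=
        exists_small_piece y U h hUcard hU0 hUmult
      have hU'sum : ∑ i ∈ U \ P, y i = 0 := by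
        have := Finset.sum_sdiff hPU (f := y)
        rw [hUsum] at this
        have h2 : ∑ i ∈ U \ P, y i + ∑ i ∈ P, y i = 0 := this
        rw [hPsum, add_zero] at h2
        exact h2
      have hPU1 : 1 ≤ P.card := card_pos.mpr hPne
      have hsd : (U \ P).card = U.card - P.card := card_sdiff_of_subset hPU
      have hPle : P.card ≤ U.card := card_le_card hPU
      exact IH (U \ P) (sdiff_ssubset hPU hPne) ((sdiff_subset).trans hUT) hU'sum (by omega)

end GaoProof

/-- `D` is the Davenport constant of `G`: every sequence of `D` elements has a
nonempty zero-sum subsequence, and some sequence of `D - 1` elements has none. -/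
def IsDavenport (G : Type*) [AddCommGroup G] [Fintype G] (D : ℕ) : Prop :=
  (∀ x : Fin D → G, ∃ I : Finset (Fin D), I.Nonempty ∧ ∑ i ∈ I, x i = 0) ∧
  (∃ x : Fin (D - 1) → G, ∀ I : Finset (Fin (D - 1)), I.Nonempty → ∑ i ∈ I, x i ≠ 0)

theorem stmt_5 {G : Type*} [AddCommGroup G] [Fintype G] (n D : ℕ)
    (hn : Fintype.card G = n) (hD : IsDavenport G D)
    (x : Fin (n + D - 1) → G) :
    ∃ I : Finset (Fin (n + D - 1)), I.card = n ∧ ∑ i ∈ I, x i = 0 := by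
  classical
  obtain ⟨hdav1, -⟩ := hD
  have hn1 : 1 ≤ n := hn ▸ Fintype.card_pos
  have hD1 : 1 ≤ D := by
    by_contra hD0
    push_neg at hD0
    have hD0' : D = 0 := by omega
    subst hD0'
    obtain ⟨I, hIne, -⟩ := hdav1 (fun _ => 0)
    obtain ⟨i, -⟩ := hIne
    exact i.elim0
  -- choose a value of maximal multiplicity and translate it to zero
  obtain ⟨c, -, hc⟩ := Finset.exists_max_image (univ : Finset G)
    (fun g => (univ.filter (fun i : Fin (n + D - 1) => x i = g)).card) ⟨0, mem_univ 0⟩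
  set h : ℕ := (univ.filter (fun i : Fin (n + D - 1) => x i = c)).card with hh
  set y : Fin (n + D - 1) → G := fun i => x i - c with hy
  have hYmult : ∀ g : G,
      ((univ : Finset (Fin (n + D - 1))).filter (fun i => y i = g)).card ≤ h := by
    intro g
    have he : (univ : Finset (Fin (n + D - 1))).filter (fun i => y i = g)
        = univ.filter (fun i => x i = g + c) := by
      ext i
      simp [hy, sub_eq_iff_eq_add]
    rw [he, hh]
    exact hc (g + c) (mem_univ _)
  set Z : Finset (Fin (n + D - 1)) := univ.filter (fun i => y i = 0) with hZ
  set T : Finset (Fin (n + D - 1)) := univ.filter (fun i => ¬(y i = 0)) with hT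
  have hZcard : Z.card = h := by
    have he : Z = univ.filter (fun i => x i = c) := by
      rw [hZ]; ext i; simp [hy, sub_eq_zero]
    rw [he, hh]
  have hTZ : Z.card + T.card = n + D - 1 := by
    rw [hZ, hT]
    rw [Finset.card_filter_add_card_filter_not]
    simp
  -- the Davenport property, for subfamilies of `y`
  have hdav : ∀ s : Finset (Fin (n + D - 1)), D ≤ s.card →
      ∃ P ⊆ s, P.Nonempty ∧ ∑ i ∈ P, y i = 0 := by
    intro s hs
    obtain ⟨t, hts, htcard⟩ := Finset.exists_subset_card_eq (s := s) (n := D) hs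
    set e := t.orderIsoOfFin htcard with hed
    obtain ⟨I, hIne, hIsum⟩ := hdav1 (fun a => y (e a).1)
    have hinj : ∀ a ∈ I, ∀ b ∈ I, (e a).1 = (e b).1 → a = b := by
      intro a _ b _ hab
      exact e.injective (Subtype.coe_injective hab)
    refine ⟨I.image (fun a => (e a).1), ?_, hIne.image _, ?_⟩
    · intro j hj
      obtain ⟨a, -, rfl⟩ := mem_image.mp hj
      exact hts (e a).2
    · rw [Finset.sum_image hinj]
      exact hIsum
  -- extract a large zero-sum subfamily of nonzero terms
  obtain ⟨U, hUT, hUsum, hUcard⟩ := GaoProof.extract y D hdav T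
  have hT0 : ∀ i ∈ T, y i ≠ 0 := by
    intro i hi
    rw [hT] at hi
    exact (mem_filter.mp hi).2
  have hTmult : ∀ g : G, (T.filter (fun i => y i = g)).card ≤ h := by
    intro g
    exact le_trans (card_le_card (filter_subset_filter _ (subset_univ T))) (hYmult g)
  have hinv : Fintype.card G ≤ U.card + h := by
    rw [hn]; omega
  -- shrink it to size between `n - h` and `n`
  obtain ⟨U', hU'T, hU'sum, hU'low, hU'high⟩ :=
    GaoProof.shrink y T h hT0 hTmult U hUT hUsum hinv
  have hle : U'.card ≤ n := by omega
  have hlow : n ≤ U'.card + h := by omega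
  -- pad with zeros
  obtain ⟨W, hWZ, hWcard⟩ := Finset.exists_subset_card_eq (s := Z) (n := n - U'.card) (by omega)
  have hdisj : Disjoint U' W := by
    rw [Finset.disjoint_left]
    intro i hiU hiW
    have h1 : ¬(y i = 0) := by
      have := hU'T hiU; rw [hT] at this; exact (mem_filter.mp this).2
    have h2 : y i = 0 := by
      have := hWZ hiW; rw [hZ] at this; exact (mem_filter.mp this).2
    exact h1 h2
  have hcardI : (U' ∪ W).card = n := by
    rw [card_union_of_disjoint hdisj, hWcard]; omega
  refine ⟨U' ∪ W, hcardI, ?_⟩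
  have hxy : ∀ i : Fin (n + D - 1), x i = y i + c := by
    intro i; simp [hy]
  have hWsum : ∑ i ∈ W, y i = 0 := by
    apply Finset.sum_eq_zero
    intro i hi
    have := hWZ hi; rw [hZ] at this; exact (mem_filter.mp this).2
  calc ∑ i ∈ U' ∪ W, x i = ∑ i ∈ U' ∪ W, (y i + c) :=
        Finset.sum_congr rfl (fun i _ => hxy i)
    _ = (∑ i ∈ U' ∪ W, y i) + (U' ∪ W).card • c := by
        rw [Finset.sum_add_distrib, Finset.sum_const]
    _ = 0 := by
        have hnc : n • c = 0 := by rw [← hn]; exact card_nsmul_eq_zero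
        rw [Finset.sum_union hdisj, hU'sum, hWsum, hcardI, hnc]
        simp
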